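/- The CHSH operator C = A₁B₁ + A₂B₁ + A₂B₂ − A₁B₂, where A_i² = B_j² = I and each A_i commutes with each B_j, satisfies C² = 4I + [A₁, A₂][B₁, B₂], and consequently ‖C‖ ≤ 2√2. -/
import Mathlib


open Matrix Complex

set_option maxHeartbeats 1000000 in
/-- The CHSH operator C = A₁B₁ + A₂B₁ + A₂B₂ - A₁B₂ satisfies
C² = 4I + [A₁,A₂][B₁,B₂], and consequently its operator norm is at most 2√2. -/
theorem chsh_operator_sq_and_norm
    {n : ℕ} (A₁ A₂ B₁ B₂ : Matrix (Fin n) (Fin n) ℂ)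
    (hA₁ : A₁.IsHermitian) (hA₂ : A₂.IsHermitian)
    (hB₁ : B₁.IsHermitian) (hB₂ : B₂.IsHermitian)
    (hA₁sq : A₁ * A₁ = 1) (hA₂sq : A₂ * A₂ = 1)
    (hB₁sq : B₁ * B₁ = 1) (hB₂sq : B₂ * B₂ = 1)
    (hc₁₁ : A₁ * B₁ = B₁ * A₁) (hc₁₂ : A₁ * B₂ = B₂ * A₁)
    (hc₂₁ : A₂ * B₁ = B₁ * A₂) (hc₂₂ : A₂ * B₂ = B₂ * A₂)
    (C : Matrix (Fin n) (Fin n) ℂ)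
    (hC : C = A₁ * B₁ + A₂ * B₁ + A₂ * B₂ - A₁ * B₂) :
    C * C = (4 : ℂ) • 1 + (A₁ * A₂ - A₂ * A₁) * (B₁ * B₂ - B₂ * B₁) ∧
    ‖Matrix.toEuclideanCLM (𝕜 := ℂ) C‖ ≤ 2 * Real.sqrt 2 := by
  have h41 : (4:ℂ) • (1 : Matrix (Fin n) (Fin n) ℂ) = 1 + 1 + 1 + 1 := by
    rw [show (4:ℂ) = 1+1+1+1 by norm_num]; simp [add_smul]
  have hsq : C * C = (4 : ℂ) • 1 + (A₁ * A₂ - A₂ * A₁) * (B₁ * B₂ - B₂ * B₁) := by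
    have c₁₁ : ∀ x, B₁ * (A₁ * x) = A₁ * (B₁ * x) := fun x => by
      rw [← mul_assoc, ← hc₁₁, mul_assoc]
    have c₁₂ : ∀ x, B₂ * (A₁ * x) = A₁ * (B₂ * x) := fun x => by
      rw [← mul_assoc, ← hc₁₂, mul_assoc]
    have c₂₁ : ∀ x, B₁ * (A₂ * x) = A₂ * (B₁ * x) := fun x => by
      rw [← mul_assoc, ← hc₂₁, mul_assoc]
    have c₂₂ : ∀ x, B₂ * (A₂ * x) = A₂ * (B₂ * x) := fun x => by
      rw [← mul_assoc, ← hc₂₂, mul_assoc]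
    have sA₁ : ∀ x, A₁ * (A₁ * x) = x := fun x => by rw [← mul_assoc, hA₁sq, one_mul]
    have sA₂ : ∀ x, A₂ * (A₂ * x) = x := fun x => by rw [← mul_assoc, hA₂sq, one_mul]
    rw [hC, h41]
    simp only [add_mul, mul_add, sub_mul, mul_sub, mul_assoc, c₁₁, c₁₂, c₂₁, c₂₂, sA₁, sA₂,
      hA₁sq, hA₂sq, hB₁sq, hB₂sq, mul_one, one_mul]
    abel
  refine ⟨hsq, ?_⟩
  set f := Matrix.toEuclideanCLM (𝕜 := ℂ) (n := Fin n) with hf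
  have hone : ‖f 1‖ ≤ 1 := by
    rw [_root_.map_one]
    exact ContinuousLinearMap.norm_id_le
  have key : ∀ (A : Matrix (Fin n) (Fin n) ℂ), A.IsHermitian → A * A = 1 → ‖f A‖ ≤ 1 := by
    intro A hA hAsq
    have h1 : star (f A) = f A := by
      rw [← map_star, Matrix.star_eq_conjTranspose, hA.eq]
    have h2 : ‖f A‖ * ‖f A‖ = ‖f 1‖ := by
      rw [← CStarRing.norm_star_mul_self, h1, ← _root_.map_mul, hAsq]
    nlinarith [norm_nonneg (f A), norm_nonneg (f 1)]
  have kA₁ := key A₁ hA₁ hA₁sq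
  have kA₂ := key A₂ hA₂ hA₂sq
  have kB₁ := key B₁ hB₁ hB₁sq
  have kB₂ := key B₂ hB₂ hB₂sq
  have hCs : star (f C) = f C := by
    rw [← map_star, Matrix.star_eq_conjTranspose]
    congr 1
    rw [hC]
    simp only [conjTranspose_add, conjTranspose_sub, conjTranspose_mul,
      hA₁.eq, hA₂.eq, hB₁.eq, hB₂.eq, ← hc₁₁, ← hc₁₂, ← hc₂₁, ← hc₂₂]
  have hcommA : ‖f (A₁ * A₂ - A₂ * A₁)‖ ≤ 2 := by
    rw [map_sub, _root_.map_mul, _root_.map_mul]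
    calc ‖f A₁ * f A₂ - f A₂ * f A₁‖ ≤ ‖f A₁ * f A₂‖ + ‖f A₂ * f A₁‖ := norm_sub_le _ _
    _ ≤ ‖f A₁‖ * ‖f A₂‖ + ‖f A₂‖ * ‖f A₁‖ := by
        gcongr <;> exact norm_mul_le _ _
    _ ≤ 2 := by nlinarith [norm_nonneg (f A₁), norm_nonneg (f A₂)]
  have hcommB : ‖f (B₁ * B₂ - B₂ * B₁)‖ ≤ 2 := by
    rw [map_sub, _root_.map_mul, _root_.map_mul]
    calc ‖f B₁ * f B₂ - f B₂ * f B₁‖ ≤ ‖f B₁ * f B₂‖ + ‖f B₂ * f B₁‖ := norm_sub_le _ _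
    _ ≤ ‖f B₁‖ * ‖f B₂‖ + ‖f B₂‖ * ‖f B₁‖ := by
        gcongr <;> exact norm_mul_le _ _
    _ ≤ 2 := by nlinarith [norm_nonneg (f B₁), norm_nonneg (f B₂)]
  have hsq' : ‖f C‖ * ‖f C‖ ≤ 8 := by
    rw [← CStarRing.norm_star_mul_self, hCs, ← _root_.map_mul, hsq]
    rw [h41, map_add, map_add, map_add, map_add, _root_.map_mul]
    have n1 : ‖f 1 + f 1 + f 1 + f 1 + f (A₁ * A₂ - A₂ * A₁) * f (B₁ * B₂ - B₂ * B₁)‖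
        ≤ ‖f 1‖ + ‖f 1‖ + ‖f 1‖ + ‖f 1‖ + ‖f (A₁ * A₂ - A₂ * A₁) * f (B₁ * B₂ - B₂ * B₁)‖ := by
      refine le_trans (norm_add_le _ _) ?_
      gcongr
      refine le_trans (norm_add_le _ _) ?_
      gcongr
      refine le_trans (norm_add_le _ _) ?_
      gcongr
      exact norm_add_le _ _
    have n2 : ‖f (A₁ * A₂ - A₂ * A₁) * f (B₁ * B₂ - B₂ * B₁)‖ ≤ 2 * 2 := by
      refine le_trans (norm_mul_le _ _) ?_
      exact mul_le_mul hcommA hcommB (norm_nonneg _) (by norm_num)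
    linarith [hone]
  have h2 : Real.sqrt 2 * Real.sqrt 2 = 2 := Real.mul_self_sqrt (by norm_num)
  nlinarith [hsq', h2, Real.sqrt_nonneg 2, norm_nonneg (f C)]
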